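/- Let m ≥ 2, and for β, γ ∈ ℝ define the batch normalization map B^{(β,γ)} : ℝ^m → ℝ^m componentwise by B^{(β,γ)}(b)_i = γ·(b_i − μ_b)/σ_b + β, where μ_b = (1/m)·Σᵢ bᵢ and σ_b² = (1/m)·Σᵢ (bᵢ − μ_b)². Then for every differentiable r : ℝ^m → ℝ and every b ∈ ℝ^m with σ_b > 0, ‖∇(r ∘ B^{(β,γ)})(b)‖₂² = (γ²/σ_b²)·( ‖∇r(B^{(β,γ)}(b))‖₂² − (1/m)·⟨𝟏, ∇r(B^{(β,γ)}(b))⟩² − (1/m)·⟨B^{(0,1)}(b), ∇r(B^{(β,γ)}(b))⟩² ), where 𝟏 = (1,…,1) ∈ ℝ^m. -/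

import Mathlib

open scoped RealInnerProductSpace

/-- The empirical mean of the batch `b`. -/
noncomputable def bnMean (m : ℕ) (b : EuclideanSpace ℝ (Fin m)) : ℝ :=
  (∑ i, b i) / m

/-- The empirical variance `σ_b²` of the batch `b`. -/
noncomputable def bnVar (m : ℕ) (b : EuclideanSpace ℝ (Fin m)) : ℝ :=
  (∑ i, (b i - bnMean m b) ^ 2) / m

/-- The batch normalization map `B^{(β,γ)}(b)_i = γ·(b_i − μ_b)/σ_b + β`. -/
noncomputable def bn (m : ℕ) (β γ : ℝ) (b : EuclideanSpace ℝ (Fin m)) :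
    EuclideanSpace ℝ (Fin m) :=
  WithLp.toLp 2 (fun i => γ * (b i - bnMean m b) / Real.sqrt (bnVar m b) + β)

/-- The all-ones vector `𝟏 ∈ ℝ^m`. -/
noncomputable def onesVec (m : ℕ) : EuclideanSpace ℝ (Fin m) := WithLp.toLp 2 (fun _ => 1)

set_option maxHeartbeats 1000000 in
/-- Smoothening effect of batch normalization: for every differentiable `r` and every
batch `b` with `σ_b > 0`,
`‖∇(r ∘ B^{(β,γ)})(b)‖² = (γ²/σ_b²)·(‖∇r(B^{(β,γ)}(b))‖² − (1/m)·⟨𝟏, ∇r(B^{(β,γ)}(b))⟩²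
− (1/m)·⟨B^{(0,1)}(b), ∇r(B^{(β,γ)}(b))⟩²)`. -/
theorem batchnorm_gradient_identity
    (m : ℕ) (hm : 2 ≤ m) (β γ : ℝ)
    (r : EuclideanSpace ℝ (Fin m) → ℝ) (hr : Differentiable ℝ r)
    (b : EuclideanSpace ℝ (Fin m)) (hσ : 0 < bnVar m b) :
    ‖gradient (r ∘ bn m β γ) b‖ ^ 2
      = γ ^ 2 / bnVar m b *
          (‖gradient r (bn m β γ b)‖ ^ 2
            - (1 / m) * ⟪onesVec m, gradient r (bn m β γ b)⟫ ^ 2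
            - (1 / m) * ⟪bn m 0 1 b, gradient r (bn m β γ b)⟫ ^ 2) := by
  have hm0 : (m:ℝ) ≠ 0 := Nat.cast_ne_zero.mpr (by omega)
  have hσ0 : 0 < Real.sqrt (bnVar m b) := Real.sqrt_pos.mpr hσ
  have hσ0' : Real.sqrt (bnVar m b) ≠ 0 := ne_of_gt hσ0
  have hσsq : Real.sqrt (bnVar m b) ^ 2 = bnVar m b := Real.sq_sqrt hσ.le
  have hsum0 : ∑ i, (b i - bnMean m b) = 0 := by
    rw [Finset.sum_sub_distrib, Finset.sum_const, Finset.card_univ, Fintype.card_fin, bnMean, nsmul_eq_mul]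
    field_simp
    ring
  have hsum2 : ∑ i, (b i - bnMean m b) ^ 2 = m * bnVar m b := by
    rw [bnVar]; field_simp
  have hinner : ∀ u w : EuclideanSpace ℝ (Fin m), ⟪u, w⟫ = ∑ i, u i * w i := fun u w => by
    simp [PiLp.inner_apply, RCLike.inner_apply, conj_trivial]
    exact Finset.sum_congr rfl fun _ _ => mul_comm _ _
  have hxi : ∀ j, bn m 0 1 b j = (b j - bnMean m b) / Real.sqrt (bnVar m b) := fun j => by
    simp [bn]
  -- the continuous linear maps
  set M : EuclideanSpace ℝ (Fin m) →L[ℝ] ℝ := (m:ℝ)⁻¹ • (∑ i, EuclideanSpace.proj i) with hMdef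
  set L : EuclideanSpace ℝ (Fin m) →L[ℝ] EuclideanSpace ℝ (Fin m) :=
    (γ / Real.sqrt (bnVar m b)) •
      (ContinuousLinearMap.id ℝ (EuclideanSpace ℝ (Fin m))
        - (((m:ℝ)⁻¹ • innerSL ℝ (onesVec m)).smulRight (onesVec m))
        - (((m:ℝ)⁻¹ • innerSL ℝ (bn m 0 1 b)).smulRight (bn m 0 1 b))) with hLdef
  have hLapp : ∀ v, L v
      = (γ / Real.sqrt (bnVar m b)) •
        (v - ((m:ℝ)⁻¹ * ⟪onesVec m, v⟫) • onesVec m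
           - ((m:ℝ)⁻¹ * ⟪bn m 0 1 b, v⟫) • bn m 0 1 b) := fun v => by
    simp [hLdef, smul_smul]
  -- derivative of the mean
  have hMean : HasFDerivAt (bnMean m) M b := by
    have h : (bnMean m) = fun b' : EuclideanSpace ℝ (Fin m) => M b' := by
      funext b'
      simp [bnMean, hMdef, div_eq_inv_mul]
    rw [h]
    exact M.hasFDerivAt
  have hdev : ∀ j, HasFDerivAt (fun b' : EuclideanSpace ℝ (Fin m) => b' j - bnMean m b')
      (EuclideanSpace.proj j - M) b := fun j =>
    (EuclideanSpace.proj j).hasFDerivAt.sub hMean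
  -- derivative of the batch normalization map
  have key : ∀ i, HasFDerivAt (fun b' => bn m β γ b' i)
      (PiLp.proj 2 (fun _ : Fin m => ℝ) i ∘L L) b := by
    intro i
    have hsq : ∀ j, HasFDerivAt (fun b' : EuclideanSpace ℝ (Fin m) => (b' j - bnMean m b') ^ 2)
        ((b j - bnMean m b) • (EuclideanSpace.proj j - M)
          + (b j - bnMean m b) • (EuclideanSpace.proj j - M)) b := fun j => by
      have h := (hdev j).mul (hdev j)
      have e : (fun b' : EuclideanSpace ℝ (Fin m) => (b' j - bnMean m b') ^ 2)
          = fun b' => (b' j - bnMean m b') * (b' j - bnMean m b') := by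
        funext b'; ring
      rw [e]; exact h
    have hVar : HasFDerivAt (bnVar m)
        ((m:ℝ)⁻¹ • ∑ j, ((b j - bnMean m b) • (EuclideanSpace.proj j - M)
          + (b j - bnMean m b) • (EuclideanSpace.proj j - M))) b := by
      have hfun : bnVar m = fun b' : EuclideanSpace ℝ (Fin m) =>
          (∑ j, (b' j - bnMean m b') ^ 2) * (m:ℝ)⁻¹ := by
        funext b'; rw [bnVar, div_eq_mul_inv]
      rw [hfun]
      have := (HasFDerivAt.sum (fun j (_ : j ∈ Finset.univ) => hsq j)).mul_const (m:ℝ)⁻¹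
      simpa [smul_comm] using this
    have hsqrt : HasFDerivAt (fun b' : EuclideanSpace ℝ (Fin m) => Real.sqrt (bnVar m b'))
        ((1 / (2 * Real.sqrt (bnVar m b))) •
          ((m:ℝ)⁻¹ • ∑ j, ((b j - bnMean m b) • (EuclideanSpace.proj j - M)
            + (b j - bnMean m b) • (EuclideanSpace.proj j - M)))) b :=
      hVar.sqrt hσ.ne'
    have hinv : HasFDerivAt (fun b' : EuclideanSpace ℝ (Fin m) => (Real.sqrt (bnVar m b'))⁻¹)
        ((-(Real.sqrt (bnVar m b) ^ 2)⁻¹) •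
          ((1 / (2 * Real.sqrt (bnVar m b))) •
            ((m:ℝ)⁻¹ • ∑ j, ((b j - bnMean m b) • (EuclideanSpace.proj j - M)
              + (b j - bnMean m b) • (EuclideanSpace.proj j - M))))) b :=
      (hasDerivAt_inv hσ0.ne').comp_hasFDerivAt b hsqrt
    have hnum : HasFDerivAt (fun b' : EuclideanSpace ℝ (Fin m) => γ * (b' i - bnMean m b'))
        (γ • (EuclideanSpace.proj i - M)) b := (hdev i).const_mul γ
    have hfun : (fun b' : EuclideanSpace ℝ (Fin m) => bn m β γ b' i)
        = fun b' => (γ * (b' i - bnMean m b')) * (Real.sqrt (bnVar m b'))⁻¹ + β := by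
      funext b'; simp [bn, div_eq_mul_inv]
    have hmessy := (hnum.mul hinv).add_const β
    rw [hfun]
    have hDL : ((γ * (b i - bnMean m b)) •
          ((-(Real.sqrt (bnVar m b) ^ 2)⁻¹) •
            ((1 / (2 * Real.sqrt (bnVar m b))) •
              ((m:ℝ)⁻¹ • ∑ j, ((b j - bnMean m b) • (EuclideanSpace.proj j - M)
                  + (b j - bnMean m b) • (EuclideanSpace.proj j - M)))))
        + (Real.sqrt (bnVar m b))⁻¹ • (γ • (EuclideanSpace.proj i - M)))
        = PiLp.proj 2 (fun _ : Fin m => ℝ) i ∘L L := by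
      ext v
      simp only [hLdef, hMdef, ContinuousLinearMap.add_apply, ContinuousLinearMap.smul_apply,
        ContinuousLinearMap.sum_apply, ContinuousLinearMap.sub_apply,
        ContinuousLinearMap.coe_comp', Function.comp_apply, ContinuousLinearMap.id_apply,
        ContinuousLinearMap.smulRight_apply, innerSL_apply_apply, PiLp.proj_apply, PiLp.smul_apply,
        PiLp.sub_apply, smul_eq_mul, PiLp.inner_apply, RCLike.inner_apply, conj_trivial,
        onesVec, hxi, mul_one, one_mul]
      have hS : ∑ j, ((b j - bnMean m b) * (v j - (m:ℝ)⁻¹ * ∑ k, v k)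
          + (b j - bnMean m b) * (v j - (m:ℝ)⁻¹ * ∑ k, v k))
          = 2 * ∑ j, (b j - bnMean m b) * v j := by
        calc ∑ j, ((b j - bnMean m b) * (v j - (m:ℝ)⁻¹ * ∑ k, v k)
            + (b j - bnMean m b) * (v j - (m:ℝ)⁻¹ * ∑ k, v k))
            = ∑ j, (2 * ((b j - bnMean m b) * v j)
                - ((m:ℝ)⁻¹ * ∑ k, v k) * (2 * (b j - bnMean m b))) :=
              Finset.sum_congr rfl fun j _ => by ring
          _ = 2 * (∑ j, (b j - bnMean m b) * v j)
                - ((m:ℝ)⁻¹ * ∑ k, v k) * (2 * ∑ j, (b j - bnMean m b)) := by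
              rw [Finset.sum_sub_distrib, ← Finset.mul_sum, ← Finset.mul_sum, ← Finset.mul_sum]
          _ = 2 * ∑ j, (b j - bnMean m b) * v j := by rw [hsum0]; ring
      have hxv : ∑ j, v j * ((b j - bnMean m b) / Real.sqrt (bnVar m b))
          = (∑ j, (b j - bnMean m b) * v j) / Real.sqrt (bnVar m b) := by
        rw [Finset.sum_div]; exact Finset.sum_congr rfl fun j _ => by ring
      rw [hS, hxv]
      field_simp
      rw [← hσsq, Real.sqrt_sq hσ0.le]
      ring
    exact hDL ▸ hmessy
  have hBn : HasFDerivAt (bn m β γ) L b := by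
    rw [← hasFDerivWithinAt_univ, hasFDerivWithinAt_piLp]
    intro i
    exact (key i).hasFDerivWithinAt
  -- the gradient of the composition
  set g : EuclideanSpace ℝ (Fin m) := gradient r (bn m β γ b) with hgdef
  have hfdr : InnerProductSpace.toDual ℝ (EuclideanSpace ℝ (Fin m)) g
      = fderiv ℝ r (bn m β γ b) := by
    rw [hgdef, gradient]
    exact (InnerProductSpace.toDual ℝ (EuclideanSpace ℝ (Fin m))).apply_symm_apply _
  set w : EuclideanSpace ℝ (Fin m) :=
    (γ / Real.sqrt (bnVar m b)) •
      (g - ((m:ℝ)⁻¹ * ⟪onesVec m, g⟫) • onesVec m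
         - ((m:ℝ)⁻¹ * ⟪bn m 0 1 b, g⟫) • bn m 0 1 b) with hwdef
  have hwgrad : HasGradientAt (r ∘ bn m β γ) w b := by
    have hc : HasFDerivAt (r ∘ bn m β γ) ((fderiv ℝ r (bn m β γ b)).comp L) b :=
      (hr (bn m β γ b)).hasFDerivAt.comp b hBn
    have he : (fderiv ℝ r (bn m β γ b)).comp L
        = InnerProductSpace.toDual ℝ (EuclideanSpace ℝ (Fin m)) w := by
      ext v
      rw [ContinuousLinearMap.comp_apply, ← hfdr, InnerProductSpace.toDual_apply_apply,
        InnerProductSpace.toDual_apply_apply, hLapp, hwdef]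
      simp only [inner_sub_right, inner_sub_left, real_inner_smul_right, real_inner_smul_left]
      rw [real_inner_comm g (onesVec m), real_inner_comm g (bn m 0 1 b)]
      ring
    exact hasGradientAt_iff_hasFDerivAt.mpr (he ▸ hc)
  have hgw : gradient (r ∘ bn m β γ) b = w := hwgrad.gradient
  rw [hgw, hwdef]
  -- inner product facts
  have h11 : ⟪onesVec m, onesVec m⟫ = (m:ℝ) := by rw [hinner]; simp [onesVec]
  have h1x : ⟪onesVec m, bn m 0 1 b⟫ = 0 := by
    rw [hinner]
    simp only [onesVec, one_mul, hxi]
    rw [← Finset.sum_div, hsum0, zero_div]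
  have hxx : ⟪bn m 0 1 b, bn m 0 1 b⟫ = (m:ℝ) := by
    rw [hinner]
    simp only [hxi, ← pow_two, div_pow, hσsq]
    rw [← Finset.sum_div, hsum2, mul_div_assoc, div_self hσ.ne', mul_one]
  -- expand the squared norm
  rw [norm_smul, mul_pow, Real.norm_eq_abs, sq_abs, ← real_inner_self_eq_norm_sq,
    ← real_inner_self_eq_norm_sq g]
  simp only [inner_sub_left, inner_sub_right, real_inner_smul_left, real_inner_smul_right,
    h11, h1x, hxx]
  have hx1 : ⟪bn m 0 1 b, onesVec m⟫ = 0 := by rw [real_inner_comm]; exact h1x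
  rw [real_inner_comm g (onesVec m), real_inner_comm g (bn m 0 1 b), hx1, div_pow, hσsq]
  field_simp
  ring
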